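/- Let ρ be a d×d density matrix and let Φ₁,…,Φ_N (N ≥ 2) be quantum channels on d×d matrices, where Φ_s has Kraus operators K₁ˢ,…,K_nˢ. Then for any permutations π₁,…,π_N of {1,…,n}, ∑_{s=1}^{N} I_ρ(Φ_s) ≥ (1/N) { ∑_{i=1}^{n} I_ρ( ∑_{s=1}^{N} K^s_{π_s(i)} ) + (2/(N(N−1))) [ ∑_{1≤s<t≤N} √( ∑_{i=1}^{n} I_ρ(K^s_{π_s(i)} − K^t_{π_t(i)}) ) ]² }. -/

import Mathlib

open Matrix Finset
open scoped ComplexOrder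

/-- The positive semidefinite square root `hρ.sqrt` of the older Mathlib, spelled out. -/
noncomputable def posSemidefSqrt {d : ℕ} {ρ : Matrix (Fin d) (Fin d) ℂ} (hρ : ρ.PosSemidef) :
    Matrix (Fin d) (Fin d) ℂ :=
  hρ.1.eigenvectorUnitary.1 * diagonal ((↑) ∘ Real.sqrt ∘ hρ.1.eigenvalues) *
    (star hρ.1.eigenvectorUnitary : Matrix (Fin d) (Fin d) ℂ)

/-- Wigner–Yanase skew information `I_ρ(A) = (1/2) Tr([√ρ, A]† [√ρ, A])` of a matrix `A`
with respect to a positive semidefinite matrix `ρ`, where `√ρ = hρ.sqrt` is the positive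
semidefinite square root of `ρ`. -/
noncomputable def skewInfo {d : ℕ} {ρ : Matrix (Fin d) (Fin d) ℂ} (hρ : ρ.PosSemidef)
    (A : Matrix (Fin d) (Fin d) ℂ) : ℝ :=
  (1 / 2 : ℝ) *
    (((posSemidefSqrt hρ * A - A * posSemidefSqrt hρ)ᴴ * (posSemidefSqrt hρ * A - A * posSemidefSqrt hρ)).trace).re

section Aux

variable {d : ℕ} {ρ : Matrix (Fin d) (Fin d) ℂ}

/-- The commutator map `A ↦ [√ρ, A]` as a linear map. -/
noncomputable def Lmap (hρ : ρ.PosSemidef) :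
    Matrix (Fin d) (Fin d) ℂ →ₗ[ℂ] Matrix (Fin d) (Fin d) ℂ where
  toFun A := posSemidefSqrt hρ * A - A * posSemidefSqrt hρ
  map_add' A B := by noncomm_ring
  map_smul' c A := by
    simp [Matrix.mul_smul, Matrix.smul_mul, smul_sub]

/-- The real bilinear form underlying the skew information. -/
noncomputable def Bf (hρ : ρ.PosSemidef) (A C : Matrix (Fin d) (Fin d) ℂ) : ℝ :=
  (((Lmap hρ A)ᴴ * (Lmap hρ C)).trace).re

lemma skewInfo_eq (hρ : ρ.PosSemidef) (A : Matrix (Fin d) (Fin d) ℂ) :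
    skewInfo hρ A = (1 / 2 : ℝ) * Bf hρ A A := rfl

lemma raw_symm (X Y : Matrix (Fin d) (Fin d) ℂ) :
    ((Xᴴ * Y).trace).re = ((Yᴴ * X).trace).re := by
  have h : (Xᴴ * Y)ᴴ = Yᴴ * X := by simp [Matrix.conjTranspose_mul]
  rw [← h, Matrix.trace_conjTranspose]
  simp

lemma Bf_symm (hρ : ρ.PosSemidef) (A C : Matrix (Fin d) (Fin d) ℂ) :
    Bf hρ A C = Bf hρ C A := raw_symm _ _

lemma Bf_nonneg (hρ : ρ.PosSemidef) (A : Matrix (Fin d) (Fin d) ℂ) :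
    0 ≤ Bf hρ A A := by
  unfold Bf
  set X := Lmap hρ A
  have : ((Xᴴ * X).trace) = ∑ j, ∑ i, star (X i j) * X i j := by
    simp [Matrix.trace, Matrix.diag, Matrix.mul_apply, Matrix.conjTranspose_apply]
  rw [this]
  rw [Complex.re_sum]
  refine Finset.sum_nonneg fun j _ => ?_
  rw [Complex.re_sum]
  refine Finset.sum_nonneg fun i _ => ?_
  have : (star (X i j) * X i j).re = (X i j).re ^ 2 + (X i j).im ^ 2 := by
    simp [Complex.star_def, Complex.mul_re]
    ring
  rw [this]; positivity

lemma skewInfo_nonneg (hρ : ρ.PosSemidef) (A : Matrix (Fin d) (Fin d) ℂ) :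
    0 ≤ skewInfo hρ A := by
  rw [skewInfo_eq]
  have := Bf_nonneg hρ A
  linarith

lemma Bf_sum_sum (hρ : ρ.PosSemidef) {ι κ : Type*} (s : Finset ι) (t : Finset κ)
    (w : ι → Matrix (Fin d) (Fin d) ℂ) (z : κ → Matrix (Fin d) (Fin d) ℂ) :
    Bf hρ (∑ i ∈ s, w i) (∑ j ∈ t, z j) = ∑ i ∈ s, ∑ j ∈ t, Bf hρ (w i) (z j) := by
  unfold Bf
  rw [map_sum, map_sum, Matrix.conjTranspose_sum, Finset.sum_mul_sum]
  rw [Matrix.trace_sum, Complex.re_sum]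
  exact Finset.sum_congr rfl fun i _ => by rw [Matrix.trace_sum, Complex.re_sum]

lemma Bf_sub_sub (hρ : ρ.PosSemidef) (A C : Matrix (Fin d) (Fin d) ℂ) :
    Bf hρ (A - C) (A - C) = Bf hρ A A - 2 * Bf hρ A C + Bf hρ C C := by
  unfold Bf
  rw [map_sub]
  have hsym := raw_symm (Lmap hρ A) (Lmap hρ C)
  simp only [Matrix.conjTranspose_sub, sub_mul, mul_sub, Matrix.trace_sub, Complex.sub_re]
  linarith

lemma Bf_neg_neg (hρ : ρ.PosSemidef) (A : Matrix (Fin d) (Fin d) ℂ) :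
    Bf hρ (-A) (-A) = Bf hρ A A := by
  unfold Bf
  rw [map_neg]
  simp

lemma Bf_zero (hρ : ρ.PosSemidef) : Bf hρ 0 0 = 0 := by
  unfold Bf
  rw [map_zero]
  simp

/-- Lagrange identity for the bilinear form `Bf`. -/
lemma lagrange (hρ : ρ.PosSemidef) {N : ℕ} (w : Fin N → Matrix (Fin d) (Fin d) ℂ) :
    (N : ℝ) * ∑ s, Bf hρ (w s) (w s) =
      Bf hρ (∑ s, w s) (∑ s, w s)
        + ∑ s, ∑ t ∈ Ioi s, Bf hρ (w s - w t) (w s - w t) := by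
  set g : Fin N → Fin N → ℝ := fun s t => Bf hρ (w s - w t) (w s - w t) with hg
  have hgsymm : ∀ s t, g s t = g t s := by
    intro s t
    rw [hg]; simp only; rw [← neg_sub (w t) (w s), Bf_neg_neg]
  have hgdiag : ∀ s, g s s = 0 := by
    intro s
    simp only [hg, sub_self, Bf_zero]
  -- full double sum equals twice the upper-triangular sum
  have hdouble : ∑ s, ∑ t, g s t = 2 * ∑ s, ∑ t ∈ Ioi s, g s t := by
    have h1 := Finset.sum_sum_Ioi_add_eq_sum_sum_off_diag g
    have h2 : ∑ i : Fin N, ∑ j ∈ Ioi i, (g j i + g i j)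
        = 2 * ∑ s, ∑ t ∈ Ioi s, g s t := by
      rw [Finset.mul_sum]
      refine Finset.sum_congr rfl fun i _ => ?_
      rw [Finset.mul_sum]
      refine Finset.sum_congr rfl fun j _ => ?_
      rw [hgsymm j i]; ring
    have hinner : ∀ i : Fin N, ∑ j ∈ ({i}ᶜ : Finset (Fin N)), g j i = ∑ j, g j i := by
      intro i
      have h := Finset.sum_compl_add_sum ({i} : Finset (Fin N)) (fun j => g j i)
      simp only [Finset.sum_singleton, hgdiag i, add_zero] at h
      exact h
    have h3 : ∑ i : Fin N, ∑ j ∈ {i}ᶜ, g j i = ∑ s, ∑ t, g s t := by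
      rw [Finset.sum_congr rfl fun i (_ : i ∈ (univ : Finset (Fin N))) => hinner i]
      exact Finset.sum_comm
    rw [← h2, h1]
    convert h3.symm using 3
  -- expand the full double sum
  have hfull : ∑ s, ∑ t, g s t
      = 2 * (N : ℝ) * ∑ s, Bf hρ (w s) (w s) - 2 * Bf hρ (∑ s, w s) (∑ s, w s) := by
    have hB : Bf hρ (∑ s, w s) (∑ s, w s) = ∑ s, ∑ t, Bf hρ (w s) (w t) :=
      Bf_sum_sum hρ _ _ _ _
    have : ∀ s, ∑ t, g s t
        = (N : ℝ) * Bf hρ (w s) (w s) - 2 * (∑ t, Bf hρ (w s) (w t))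
          + ∑ t, Bf hρ (w t) (w t) := by
      intro s
      simp only [hg, Bf_sub_sub]
      rw [Finset.sum_add_distrib, Finset.sum_sub_distrib, Finset.sum_const,
        Finset.card_univ, Fintype.card_fin, ← Finset.mul_sum, nsmul_eq_mul]
    rw [Finset.sum_congr rfl fun s _ => this s]
    rw [Finset.sum_add_distrib, Finset.sum_sub_distrib, ← Finset.mul_sum, ← Finset.mul_sum,
      Finset.sum_const, Finset.card_univ, Fintype.card_fin, nsmul_eq_mul, hB]
    ring
  have := hdouble.symm.trans hfull
  linarith
end Aux

theorem stmt_1 {d n N : ℕ} (hN : 2 ≤ N)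
    (ρ : Matrix (Fin d) (Fin d) ℂ) (hρ : ρ.PosSemidef) (htr : ρ.trace = 1)
    (K : Fin N → Fin n → Matrix (Fin d) (Fin d) ℂ)
    (hK : ∀ s, ∑ i, (K s i)ᴴ * K s i = 1)
    (π : Fin N → Equiv.Perm (Fin n)) :
    ∑ s, ∑ i, skewInfo hρ (K s i) ≥
      (1 / (N : ℝ)) *
        ((∑ i, skewInfo hρ (∑ s, K s (π s i)))
          + (2 / ((N : ℝ) * ((N : ℝ) - 1))) *
            (∑ s : Fin N, ∑ t ∈ Finset.Ioi s,
              Real.sqrt (∑ i, skewInfo hρ (K s (π s i) - K t (π t i)))) ^ 2) := by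
  have hN1 : (1 : ℝ) < (N : ℝ) := by exact_mod_cast Nat.lt_of_lt_of_le one_lt_two hN
  have hNpos : (0 : ℝ) < N := by linarith
  have hNN : (0 : ℝ) < (N : ℝ) * ((N : ℝ) - 1) := by nlinarith
  -- abbreviations
  set c : Fin N → Fin N → ℝ :=
    fun s t => ∑ i, skewInfo hρ (K s (π s i) - K t (π t i)) with hc
  set D : ℝ := ∑ s, ∑ t ∈ Ioi s, c s t with hD
  set S : ℝ := ∑ s : Fin N, ∑ t ∈ Ioi s, Real.sqrt (c s t) with hS
  set T1 : ℝ := ∑ i, skewInfo hρ (∑ s, K s (π s i)) with hT1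
  set L : ℝ := ∑ s, ∑ i, skewInfo hρ (K s i) with hL
  have hcnonneg : ∀ s t, 0 ≤ c s t := fun s t =>
    Finset.sum_nonneg fun i _ => skewInfo_nonneg hρ _
  -- Lagrange identity, summed over i
  have hLag : (N : ℝ) * L = T1 + D := by
    have hper : ∀ s : Fin N, ∑ i, skewInfo hρ (K s i)
        = ∑ i, skewInfo hρ (K s (π s i)) :=
      fun s => (Equiv.sum_comp (π s) (fun i => skewInfo hρ (K s i))).symm
    have key : ∀ i : Fin n, (N : ℝ) * ∑ s, skewInfo hρ (K s (π s i))
        = skewInfo hρ (∑ s, K s (π s i))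
          + ∑ s, ∑ t ∈ Ioi s, skewInfo hρ (K s (π s i) - K t (π t i)) := by
      intro i
      have hlag := lagrange hρ (fun s => K s (π s i))
      simp only [skewInfo_eq]
      have h5 : ∑ s : Fin N, (1/2 : ℝ) * Bf hρ (K s (π s i)) (K s (π s i))
          = (1/2 : ℝ) * ∑ s, Bf hρ (K s (π s i)) (K s (π s i)) :=
        (Finset.mul_sum _ _ _).symm
      have h4 : ∑ s : Fin N, ∑ t ∈ Ioi s, (1/2 : ℝ) *
            Bf hρ (K s (π s i) - K t (π t i)) (K s (π s i) - K t (π t i))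
          = (1/2 : ℝ) * ∑ s : Fin N, ∑ t ∈ Ioi s,
            Bf hρ (K s (π s i) - K t (π t i)) (K s (π s i) - K t (π t i)) := by
        rw [Finset.mul_sum]
        exact Finset.sum_congr rfl fun s _ => (Finset.mul_sum _ _ _).symm
      rw [h5, h4]
      linarith
    calc (N : ℝ) * L = ∑ i, ((N : ℝ) * ∑ s, skewInfo hρ (K s (π s i))) := by
          rw [hL, Finset.sum_congr rfl fun s (_ : s ∈ (univ : Finset (Fin N))) => hper s,
            Finset.sum_comm, Finset.mul_sum]
      _ = ∑ i, (skewInfo hρ (∑ s, K s (π s i))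
            + ∑ s, ∑ t ∈ Ioi s, skewInfo hρ (K s (π s i) - K t (π t i))) :=
          Finset.sum_congr rfl fun i _ => key i
      _ = T1 + ∑ i, ∑ s, ∑ t ∈ Ioi s, skewInfo hρ (K s (π s i) - K t (π t i)) := by
          rw [Finset.sum_add_distrib, hT1]
      _ = T1 + D := by
          congr 1
          rw [hD, hc]
          exact Finset.sum_comm.trans (Finset.sum_congr rfl fun s _ => Finset.sum_comm)
  -- Cauchy–Schwarz step
  have hCS : S ^ 2 ≤ ((N : ℝ) * ((N : ℝ) - 1) / 2) * D := by
    have hSsig : S = ∑ x ∈ (univ : Finset (Fin N)).sigma (fun s => Ioi s),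
        Real.sqrt (c x.1 x.2) := Finset.sum_sigma' _ _ _
    have hDsig : D = ∑ x ∈ (univ : Finset (Fin N)).sigma (fun s => Ioi s), c x.1 x.2 :=
      Finset.sum_sigma' _ _ _
    have hcard : (#((univ : Finset (Fin N)).sigma (fun s => Ioi s)) : ℝ)
        ≤ (N : ℝ) * ((N : ℝ) - 1) / 2 := by
      rw [Finset.card_sigma]
      have hstep : ∑ a : Fin N, #(Ioi a) = ∑ a : Fin N, (N - 1 - (a : ℕ)) :=
        Finset.sum_congr rfl fun a _ => Fin.card_Ioi a
      rw [hstep, Fin.sum_univ_eq_sum_range (fun k => N - 1 - k) N]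
      have h2 : (∑ k ∈ Finset.range N, (N - 1 - k)) * 2 = N * (N - 1) := by
        have h3 : ∑ k ∈ Finset.range N, (N - 1 - k) = ∑ k ∈ Finset.range N, k :=
          Finset.sum_range_reflect (fun i => i) N
        rw [h3, Finset.sum_range_id_mul_two]
      have hcast : ((∑ k ∈ Finset.range N, (N - 1 - k) : ℕ) : ℝ) * 2
          = (N : ℝ) * ((N : ℝ) - 1) := by
        have h2' := congrArg (Nat.cast (R := ℝ)) h2
        rw [Nat.cast_mul, Nat.cast_mul, Nat.cast_ofNat, Nat.cast_sub (by omega : 1 ≤ N),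
          Nat.cast_one] at h2'
        exact h2'
      linarith
    calc S ^ 2 = (∑ x ∈ (univ : Finset (Fin N)).sigma (fun s => Ioi s),
          Real.sqrt (c x.1 x.2)) ^ 2 := by rw [hSsig]
      _ ≤ (#((univ : Finset (Fin N)).sigma (fun s => Ioi s)) : ℝ)
          * ∑ x ∈ (univ : Finset (Fin N)).sigma (fun s => Ioi s),
            Real.sqrt (c x.1 x.2) ^ 2 := sq_sum_le_card_mul_sum_sq
      _ = (#((univ : Finset (Fin N)).sigma (fun s => Ioi s)) : ℝ) * D := by
          rw [hDsig]
          congr 1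
          exact Finset.sum_congr rfl fun x _ => Real.sq_sqrt (hcnonneg x.1 x.2)
      _ ≤ ((N : ℝ) * ((N : ℝ) - 1) / 2) * D := by
          have hDnn : 0 ≤ D := Finset.sum_nonneg fun s _ =>
            Finset.sum_nonneg fun t _ => hcnonneg s t
          exact mul_le_mul_of_nonneg_right hcard hDnn
  -- combine
  have h1 : (2 / ((N : ℝ) * ((N : ℝ) - 1))) * S ^ 2 ≤ D := by
    rw [div_mul_eq_mul_div, div_le_iff₀ hNN]
    nlinarith
  have h2 : T1 + (2 / ((N : ℝ) * ((N : ℝ) - 1))) * S ^ 2 ≤ (N : ℝ) * L := by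
    rw [hLag]; linarith
  rw [ge_iff_le, one_div, inv_mul_le_iff₀ hNpos]
  linarith
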